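/- For \hat{G} \in G(G,p) with Laplacian L, the expected second-smallest eigenvalue of L^2 satisfies E[\lambda_2(L^2)] \leq (1/(n-1)) (4mp - 2mp^2 + p^2 \sum_{i=1}^n d_i^2). -/

import Mathlib

open MeasureTheory ProbabilityTheory Finset SimpleGraph
attribute [local instance] Classical.propDecidable

/-- The eigenvalues of a real symmetric matrix, sorted in increasing order. -/
noncomputable def sortedEigs {n : ℕ} (A : Matrix (Fin n) (Fin n) ℝ) : List ℝ :=
  if hA : A.IsHermitian then
    Multiset.sort (Multiset.ofList (List.ofFn hA.eigenvalues)) (· ≤ ·)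
  else []

/-- `eig A i` is the `i`-th smallest eigenvalue `λ_i(A)` (1-indexed). -/
noncomputable def eig {n : ℕ} (A : Matrix (Fin n) (Fin n) ℝ) (i : ℕ) : ℝ :=
  (sortedEigs A).getD (i - 1) 0

lemma trace_eq_sum_eigs {n : ℕ} {A : Matrix (Fin n) (Fin n) ℝ} (hA : A.IsHermitian) :
    A.trace = ∑ i, hA.eigenvalues i := by
  nth_rewrite 1 [hA.spectral_theorem]
  rw [Unitary.conjStarAlgAut_apply, Matrix.trace_mul_cycle, Unitary.coe_star_mul_self, one_mul, Matrix.trace_diagonal]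
  simp

lemma eig_two_le {n : ℕ} (hn : 2 ≤ n) {A : Matrix (Fin n) (Fin n) ℝ} (hA : A.PosSemidef) :
    eig A 2 ≤ A.trace / ((n : ℝ) - 1) := by
  have hH := hA.1
  set l : List ℝ := Multiset.sort (Multiset.ofList (List.ofFn hH.eigenvalues)) (· ≤ ·) with hl
  have hlc : (l : Multiset ℝ) = Multiset.ofList (List.ofFn hH.eigenvalues) :=
    Multiset.sort_eq _ _
  have hlen : l.length = n := by
    have := congrArg Multiset.card hlc
    simpa using this
  have hsort : l.Pairwise (· ≤ ·) := Multiset.pairwise_sort _ _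
  have hmem : ∀ x ∈ l, (0:ℝ) ≤ x := by
    intro x hx
    have hx2 : x ∈ List.ofFn hH.eigenvalues := by
      rw [← Multiset.mem_coe, hlc] at hx; exact hx
    obtain ⟨i, rfl⟩ := List.mem_ofFn.mp hx2
    exact hA.eigenvalues_nonneg _
  have hsum : l.sum = A.trace := by
    rw [trace_eq_sum_eigs hH]
    have : l.sum = (Multiset.ofList (List.ofFn hH.eigenvalues)).sum := by
      rw [← hlc]; rfl
    rw [this]; simp [List.sum_ofFn]
  have h1 : 1 < l.length := by omega
  have h0 : 0 < l.length := by omega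
  set c : ℝ := l.get ⟨1, h1⟩ with hc
  have heig : eig A 2 = c := by
    rw [eig, sortedEigs, dif_pos hH]
    exact List.getD_eq_getElem _ _ h1
  have hsum' : l.sum = ∑ i : Fin l.length, l.get i := by
    conv_lhs => rw [← List.ofFn_get l]
    rw [List.sum_ofFn]
  have hkey : ((l.length - 1 : ℕ) : ℝ) * c ≤ l.sum := by
    rw [hsum', ← Finset.add_sum_erase _ _ (Finset.mem_univ (⟨0, h0⟩ : Fin l.length))]
    have hcard : ((Finset.univ : Finset (Fin l.length)).erase ⟨0, h0⟩).card = l.length - 1 := by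
      simp
    have hle : ∀ i ∈ (Finset.univ : Finset (Fin l.length)).erase ⟨0, h0⟩, c ≤ l.get i := by
      intro i hi
      have : (⟨1, h1⟩ : Fin l.length) ≤ i := by
        have := Finset.ne_of_mem_erase hi
        have : i.val ≠ 0 := fun h => this (Fin.ext h)
        exact Fin.mk_le_of_le_val (by omega)
      exact hsort.rel_get_of_le this
    have := Finset.card_nsmul_le_sum _ _ c hle
    rw [hcard, nsmul_eq_mul] at this
    have h00 : (0:ℝ) ≤ l.get ⟨0, h0⟩ := hmem _ (List.get_mem l ⟨0, h0⟩)
    linarith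
  have hnpos : (0:ℝ) < (n:ℝ) - 1 := by
    have : (2:ℝ) ≤ (n:ℝ) := by exact_mod_cast hn
    linarith
  rw [heig, le_div_iff₀ hnpos]
  rw [hlen] at hkey
  have : ((n - 1 : ℕ) : ℝ) = (n : ℝ) - 1 := by
    push_cast [Nat.cast_sub (by omega : 1 ≤ n)]; ring
  rw [this] at hkey
  linarith [hsum ▸ hkey]

lemma lap_sq_trace {n : ℕ} (K : SimpleGraph (Fin n)) [DecidableRel K.Adj] :
    (K.lapMatrix ℝ * K.lapMatrix ℝ).trace
      = (∑ i, ∑ j, ∑ k, ((if K.Adj i j then (1:ℝ) else 0) * (if K.Adj i k then (1:ℝ) else 0)))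
        + ∑ i, ∑ j, (if K.Adj i j then (1:ℝ) else 0) := by
  have hent : ∀ i j, (K.lapMatrix ℝ) i j * (K.lapMatrix ℝ) j i =
      if j = i then ((K.degree i : ℝ))^2 else (if K.Adj i j then (1:ℝ) else 0) := by
    intro i j
    by_cases hij : j = i
    · subst hij
      simp [lapMatrix, degMatrix, Matrix.sub_apply, Matrix.diagonal_apply_eq, sq]
    · have hij' : i ≠ j := fun h => hij h.symm
      by_cases hadj : K.Adj i j
      · simp [lapMatrix, degMatrix, Matrix.sub_apply, Matrix.diagonal_apply_ne _ hij,
          Matrix.diagonal_apply_ne _ hij', hadj, hadj.symm, hij, if_neg hij]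
      · have hadj' : ¬ K.Adj j i := fun h => hadj h.symm
        simp [lapMatrix, degMatrix, Matrix.sub_apply, Matrix.diagonal_apply_ne _ hij,
          Matrix.diagonal_apply_ne _ hij', hadj, hadj', hij]
  rw [Matrix.trace]
  have : ∀ i, (K.lapMatrix ℝ * K.lapMatrix ℝ).diag i
      = (∑ j, ∑ k, ((if K.Adj i j then (1:ℝ) else 0) * (if K.Adj i k then (1:ℝ) else 0)))
        + ∑ j, (if K.Adj i j then (1:ℝ) else 0) := by
    intro i
    rw [Matrix.diag_apply, Matrix.mul_apply]
    have : ∀ j, (K.lapMatrix ℝ) i j * (K.lapMatrix ℝ) j i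
        = (if j = i then ((K.degree i : ℝ))^2 else 0) + (if K.Adj i j then (1:ℝ) else 0) := by
      intro j
      rw [hent i j]
      by_cases hij : j = i
      · subst hij; simp
      · simp [hij]
    rw [Finset.sum_congr rfl fun j _ => this j, Finset.sum_add_distrib,
      Finset.sum_ite_eq' Finset.univ i (fun _ => ((K.degree i : ℝ))^2)]
    simp only [Finset.mem_univ, if_true]
    congr 1
    rw [sq, K.degree_eq_sum_if_adj (R := ℝ) i, Finset.sum_mul_sum]
  rw [Finset.sum_congr rfl fun i _ => this i, Finset.sum_add_distrib]


/-- For a random subgraph `H ω` of a connected graph `G` with Laplacian `L`, the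
expected second-smallest eigenvalue of `L²` satisfies
`E[λ₂(L²)] ≤ (4mp - 2mp² + p² ∑ᵢ dᵢ²)/(n-1)`. -/
theorem expected_lambda2_lap_sq_upper {Ω : Type*} [Fintype Ω] [MeasurableSpace Ω]
    [MeasurableSingletonClass Ω] (μ : Measure Ω) [IsProbabilityMeasure μ]
    {n : ℕ} (hn : 2 ≤ n) (G : SimpleGraph (Fin n)) (hG : G.Connected)
    (p : ℝ) (hp0 : 0 < p) (hp1 : p < 1)
    (H : Ω → SimpleGraph (Fin n)) (hsub : ∀ ω, H ω ≤ G)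
    (hedge : ∀ e ∈ G.edgeSet, (μ {ω | e ∈ (H ω).edgeSet}).toReal = p)
    (hind : iIndepSet (fun e : G.edgeSet => {ω | (e : Sym2 (Fin n)) ∈ (H ω).edgeSet}) μ) :
    (∫ ω, eig ((H ω).lapMatrix ℝ * (H ω).lapMatrix ℝ) 2 ∂μ)
      ≤ (1 / ((n : ℝ) - 1)) *
        (4 * (G.edgeFinset.card : ℝ) * p - 2 * (G.edgeFinset.card : ℝ) * p ^ 2
          + p ^ 2 * ∑ i, (G.degree i : ℝ) ^ 2) := by
  -- Step 1 : pointwise bound and monotonicity of the integral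
  have hPSD : ∀ ω, ((H ω).lapMatrix ℝ * (H ω).lapMatrix ℝ).PosSemidef := by
    intro ω
    have h : Matrix.conjTranspose ((H ω).lapMatrix ℝ) = (H ω).lapMatrix ℝ :=
      (posSemidef_lapMatrix ℝ (H ω)).1
    have := Matrix.posSemidef_conjTranspose_mul_self ((H ω).lapMatrix ℝ)
    rwa [h] at this
  have step1 : (∫ ω, eig ((H ω).lapMatrix ℝ * (H ω).lapMatrix ℝ) 2 ∂μ)
      ≤ ∫ ω, ((H ω).lapMatrix ℝ * (H ω).lapMatrix ℝ).trace / ((n : ℝ) - 1) ∂μ :=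
    integral_mono (.of_finite) (.of_finite) (fun ω => eig_two_le hn (hPSD ω))
  rw [integral_div] at step1
  -- basic integrals
  have hmeas : ∀ s : Set Ω, MeasurableSet s := fun s => (Set.toFinite s).measurableSet
  have hXval : ∀ i j : Fin n,
      (∫ ω, (if (H ω).Adj i j then (1:ℝ) else 0) ∂μ) = if G.Adj i j then p else 0 := by
    intro i j
    by_cases hadj : G.Adj i j
    · have hfun : (fun ω => (if (H ω).Adj i j then (1:ℝ) else 0))
          = Set.indicator {ω | s(i, j) ∈ (H ω).edgeSet} 1 := by
        funext ω
        by_cases h : (H ω).Adj i j <;>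
          simp [h, Set.indicator_apply, Set.mem_setOf_eq, mem_edgeSet]
      rw [hfun, integral_indicator_one (hmeas _), measureReal_def, hedge _ ((mem_edgeSet G).mpr hadj),
        if_pos hadj]
    · have hfun : (fun ω => (if (H ω).Adj i j then (1:ℝ) else 0)) = fun _ => (0:ℝ) := by
        funext ω
        have : ¬ (H ω).Adj i j := fun h => hadj (hsub ω h)
        simp [this]
      rw [hfun, integral_zero, if_neg hadj]
  have hpair : ∀ e f : Sym2 (Fin n), e ∈ G.edgeSet → f ∈ G.edgeSet → e ≠ f →
      (μ ({ω | e ∈ (H ω).edgeSet} ∩ {ω | f ∈ (H ω).edgeSet})).toReal = p ^ 2 := by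
    intro e f he hf hne
    have hne' : (⟨e, he⟩ : G.edgeSet) ≠ ⟨f, hf⟩ := fun h => hne (congrArg Subtype.val h)
    have hmi := hind.meas_biInter ({⟨e, he⟩, ⟨f, hf⟩} : Finset G.edgeSet)
    rw [Finset.set_biInter_insert, Finset.set_biInter_singleton,
      Finset.prod_insert (by simp [hne']), Finset.prod_singleton] at hmi
    rw [hmi, ENNReal.toReal_mul, hedge _ he, hedge _ hf, sq]
  have hXXval : ∀ i j k : Fin n,
      (∫ ω, (if (H ω).Adj i j then (1:ℝ) else 0) * (if (H ω).Adj i k then (1:ℝ) else 0) ∂μ)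
        = if G.Adj i j ∧ G.Adj i k then (if j = k then p else p ^ 2) else 0 := by
    intro i j k
    by_cases hjk : j = k
    · subst hjk
      have hfun : (fun ω => (if (H ω).Adj i j then (1:ℝ) else 0)
            * (if (H ω).Adj i j then (1:ℝ) else 0))
          = fun ω => (if (H ω).Adj i j then (1:ℝ) else 0) := by
        funext ω; by_cases h : (H ω).Adj i j <;> simp [h]
      rw [hfun, hXval]
      by_cases hadj : G.Adj i j <;> simp [hadj]
    · by_cases hadj : G.Adj i j ∧ G.Adj i k
      · obtain ⟨h1, h2⟩ := hadj
        have hfun : (fun ω => (if (H ω).Adj i j then (1:ℝ) else 0)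
              * (if (H ω).Adj i k then (1:ℝ) else 0))
            = Set.indicator ({ω | s(i, j) ∈ (H ω).edgeSet} ∩ {ω | s(i, k) ∈ (H ω).edgeSet}) 1 := by
          funext ω
          by_cases ha : (H ω).Adj i j <;> by_cases hb : (H ω).Adj i k <;>
            simp [ha, hb, Set.indicator_apply, Set.mem_inter_iff, Set.mem_setOf_eq, mem_edgeSet]
        have hne : s(i, j) ≠ s(i, k) := fun h => hjk (Sym2.congr_right.mp h)
        rw [hfun, integral_indicator_one (hmeas _), measureReal_def,
          hpair _ _ ((mem_edgeSet G).mpr h1) ((mem_edgeSet G).mpr h2) hne,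
          if_pos ⟨h1, h2⟩, if_neg hjk]
      · have hfun : (fun ω => (if (H ω).Adj i j then (1:ℝ) else 0)
              * (if (H ω).Adj i k then (1:ℝ) else 0)) = fun _ => (0:ℝ) := by
          funext ω
          rcases not_and_or.mp hadj with h | h
          · have : ¬ (H ω).Adj i j := fun hh => h (hsub ω hh); simp [this]
          · have : ¬ (H ω).Adj i k := fun hh => h (hsub ω hh); simp [this]
        rw [hfun, integral_zero, if_neg hadj]
  -- Step 2 : compute the expected trace
  have hdegsum : ∑ i, (G.degree i : ℝ) = 2 * (G.edgeFinset.card : ℝ) := by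
    exact_mod_cast congrArg (Nat.cast : ℕ → ℝ) G.sum_degrees_eq_twice_card_edges
  have htr : (∫ ω, ((H ω).lapMatrix ℝ * (H ω).lapMatrix ℝ).trace ∂μ)
      = 4 * (G.edgeFinset.card : ℝ) * p - 2 * (G.edgeFinset.card : ℝ) * p ^ 2
          + p ^ 2 * ∑ i, (G.degree i : ℝ) ^ 2 := by
    have hfun : (fun ω => ((H ω).lapMatrix ℝ * (H ω).lapMatrix ℝ).trace)
        = fun ω => (∑ i, ∑ j, ∑ k, ((if (H ω).Adj i j then (1:ℝ) else 0)
              * (if (H ω).Adj i k then (1:ℝ) else 0)))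
            + ∑ i, ∑ j, (if (H ω).Adj i j then (1:ℝ) else 0) :=
      funext fun ω => lap_sq_trace (H ω)
    rw [hfun, integral_add (.of_finite) (.of_finite),
      integral_finset_sum _ (fun i _ => .of_finite),
      integral_finset_sum _ (fun i _ => .of_finite)]
    rw [Finset.sum_congr rfl fun i _ => integral_finset_sum _ (fun j _ => .of_finite),
      Finset.sum_congr rfl fun i _ => Finset.sum_congr rfl
        fun j _ => integral_finset_sum _ (fun k _ => .of_finite)]
    rw [Finset.sum_congr rfl fun i _ => Finset.sum_congr rfl fun j _ =>
      Finset.sum_congr rfl fun k _ => hXXval i j k]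
    rw [Finset.sum_congr rfl fun i _ => integral_finset_sum _ (fun j _ => Integrable.of_finite)]
    rw [Finset.sum_congr rfl fun i _ => Finset.sum_congr rfl fun j _ => hXval i j]
    -- now pure algebra
    have hterm : ∀ i j k : Fin n,
        (if G.Adj i j ∧ G.Adj i k then (if j = k then p else p ^ 2) else 0)
          = (if G.Adj i j then (1:ℝ) else 0) * (if G.Adj i k then (1:ℝ) else 0) * p ^ 2
            + (if j = k then (if G.Adj i j then (1:ℝ) else 0) * (p - p ^ 2) else 0) := by
      intro i j k
      rcases eq_or_ne j k with rfl | h3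
      · by_cases h1 : G.Adj i j <;> simp [h1] <;> ring
      · by_cases h1 : G.Adj i j <;> by_cases h2 : G.Adj i k <;> simp [h1, h2, h3]
    simp only [hterm, Finset.sum_add_distrib]
    have e2 : ∀ i : Fin n,
        (∑ j, ∑ k, (if j = k then (if G.Adj i j then (1:ℝ) else 0) * (p - p ^ 2) else 0))
          = (G.degree i : ℝ) * (p - p ^ 2) := by
      intro i
      have : ∀ j : Fin n, (∑ k, (if j = k then (if G.Adj i j then (1:ℝ) else 0) * (p - p ^ 2)
          else 0)) = (if G.Adj i j then (1:ℝ) else 0) * (p - p ^ 2) := by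
        intro j
        rw [Finset.sum_ite_eq Finset.univ j
          (fun _ => (if G.Adj i j then (1:ℝ) else 0) * (p - p ^ 2))]
        simp
      rw [Finset.sum_congr rfl fun j _ => this j, ← Finset.sum_mul,
        ← G.degree_eq_sum_if_adj (R := ℝ) i]
    have e1 : ∀ i : Fin n,
        (∑ j, ∑ k, (if G.Adj i j then (1:ℝ) else 0) * (if G.Adj i k then (1:ℝ) else 0) * p ^ 2)
          = (G.degree i : ℝ) ^ 2 * p ^ 2 := by
      intro i
      simp only [← Finset.sum_mul]
      rw [← Finset.sum_mul_sum, ← G.degree_eq_sum_if_adj (R := ℝ) i]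
      ring
    have e3 : ∀ i : Fin n, (∑ j, (if G.Adj i j then p else 0)) = (G.degree i : ℝ) * p := by
      intro i
      have : ∀ j : Fin n, (if G.Adj i j then p else 0)
          = (if G.Adj i j then (1:ℝ) else 0) * p := by
        intro j; by_cases h : G.Adj i j <;> simp [h]
      rw [Finset.sum_congr rfl fun j _ => this j, ← Finset.sum_mul,
        ← G.degree_eq_sum_if_adj (R := ℝ) i]
    rw [Finset.sum_congr rfl fun i _ => e1 i, Finset.sum_congr rfl fun i _ => e2 i,
      Finset.sum_congr rfl fun i _ => e3 i, ← Finset.sum_mul, ← Finset.sum_mul, ← Finset.sum_mul,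
      hdegsum]
    ring
  rw [htr] at step1
  refine step1.trans (le_of_eq ?_)
  ring
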